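/- Let X be a compact metric space and Q : X → [0,∞) continuous, and suppose X is Q-amenable, that is, 0 < λ^{Q_c}(B) < ∞ for every non-empty open ball B of finite radius in X. Then α(x) = Q(x) for all x ∈ X. -/

import Mathlib

/- STATEMENT 7: Let X be a compact metric space and Q : X → [0,∞) continuous, and
   suppose X is Q-amenable: 0 < λ^{Q_c}(B) < ∞ for every non-empty open ball B of
   finite radius. Then α(x) = Q(x) for all x, where α is the local Hausdorff dimension
   and λ^{Q_c} is the Carathéodory construction over covers by open balls with
   designated centers, with weight diam(B_ρ(x))^{Q(x)}. -/

open MeasureTheory Metric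
open scoped ENNReal

/-- The local Hausdorff dimension `α(x) = inf_{ε > 0} dim_H (B_ε(x))`. -/
noncomputable def localDimH {X : Type*} [MetricSpace X] (x : X) : ℝ≥0∞ :=
  ⨅ (ε : ℝ) (_ : 0 < ε), dimH (Metric.ball x ε)

/-- The measure `λ^{Q_c}`: Carathéodory construction over covers by open balls with
designated centers, a ball with designated center `x` receiving weight
`diam(B)^{Q(x)}`. (Taking the infimum over all representations of a set as a centered
open ball is the same as allowing designated centers in covers; sets that are not open
balls get weight `∞`, i.e. are disallowed.) -/
noncomputable def lambdaQc {X : Type*} [MetricSpace X] [MeasurableSpace X] [BorelSpace X]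
    (Q : X → ℝ) : Measure X :=
  Measure.mkMetric' (fun U =>
    ⨅ (x : X) (ρ : ℝ) (_ : U = Metric.ball x ρ), EMetric.diam U ^ Q x)


open scoped NNReal

noncomputable def mQ {X : Type*} [MetricSpace X] (Q : X → ℝ) : Set X → ℝ≥0∞ := fun U =>
  ⨅ (x : X) (ρ : ℝ) (_ : U = Metric.ball x ρ), EMetric.diam U ^ Q x

lemma lambdaQc_eq {X : Type*} [MetricSpace X] [MeasurableSpace X] [BorelSpace X]
    (Q : X → ℝ) {s : Set X} (hs : MeasurableSet s) :
    lambdaQc Q s = OuterMeasure.mkMetric' (mQ Q) s := by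
  rw [lambdaQc, Measure.mkMetric', toMeasure_apply _ _ hs]; rfl

lemma hausdorff_outer {X : Type*} [MetricSpace X] [MeasurableSpace X] [BorelSpace X]
    (p : ℝ) (s : Set X) :
    μH[p] s = OuterMeasure.mkMetric' (fun t => EMetric.diam t ^ p) s := by
  rw [Measure.hausdorffMeasure, ← OuterMeasure.coe_mkMetric]; rfl

lemma add_rpow_le {p : ℝ} (hp : 0 ≤ p) (a b : ℝ≥0∞) :
    (a + b) ^ p ≤ (2 * a) ^ p + (2 * b) ^ p := by
  rcases le_total a b with h | h
  · calc (a + b) ^ p ≤ (2 * b) ^ p :=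
        ENNReal.rpow_le_rpow (by rw [two_mul]; exact add_le_add h le_rfl) hp
      _ ≤ _ := le_add_self
  · calc (a + b) ^ p ≤ (2 * a) ^ p :=
        ENNReal.rpow_le_rpow (by rw [two_mul]; exact add_le_add le_rfl h) hp
      _ ≤ _ := le_self_add

lemma mkMetric'_outer_apply {X : Type*} [MetricSpace X] (m : Set X → ℝ≥0∞) (s : Set X) :
    OuterMeasure.mkMetric' m s
      = ⨆ (r : ℝ≥0∞) (_ : 0 < r), OuterMeasure.mkMetric'.pre m r s := by
  simp only [OuterMeasure.mkMetric', OuterMeasure.iSup_apply]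

lemma lambdaQc_eq_zero {X : Type*} [MetricSpace X] [MeasurableSpace X] [BorelSpace X]
    (Q : X → ℝ) {x₀ : X} {p ε : ℝ} (hp : 0 < p) (hε : 0 < ε)
    (hQge : ∀ y ∈ Metric.ball x₀ ε, p ≤ Q y)
    (hμ : μH[p] (Metric.ball x₀ ε) = 0) :
    lambdaQc Q (Metric.ball x₀ ε) = 0 := by
  set B := Metric.ball x₀ ε with hB
  rw [lambdaQc_eq Q measurableSet_ball]
  refine le_antisymm ?_ zero_le
  rw [mkMetric'_outer_apply]
  have key : ∀ r : ℝ≥0∞, 0 < r → r ≤ 1 → OuterMeasure.mkMetric'.pre (mQ Q) r B ≤ 0 := by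
    intro r hr0 hr1
    refine ENNReal.le_of_forall_pos_le_add fun ζ hζ _ => ?_
    rw [zero_add]
    -- constants
    set K : ℝ≥0∞ := (4:ℝ≥0∞) ^ p with hK
    have hK0 : K ≠ 0 := by simp [hK, ENNReal.rpow_eq_zero_iff]
    have hKt : K ≠ ⊤ := ENNReal.rpow_ne_top_of_nonneg hp.le (by norm_num)
    set C : ℝ≥0∞ := (1 - (2:ℝ≥0∞)⁻¹ ^ p)⁻¹ with hC
    have hhalf : (2:ℝ≥0∞)⁻¹ ^ p < 1 := ENNReal.rpow_lt_one (by simp) hp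
    have hC0 : C ≠ 0 := ENNReal.inv_ne_zero.2 ((tsub_le_self.trans_lt ENNReal.one_lt_top).ne)
    have hCt : C ≠ ⊤ := ENNReal.inv_ne_top.2 (pos_iff_ne_zero.1 (tsub_pos_of_lt hhalf))
    have hζ0 : ((ζ:ℝ≥0∞)) ≠ 0 := by exact_mod_cast hζ.ne'
    set ε₁ : ℝ≥0∞ := (ζ : ℝ≥0∞) / 2 * K⁻¹ with hε₁def
    have hε₁0 : 0 < ε₁ := by
      refine ENNReal.mul_pos ?_ (ENNReal.inv_ne_zero.2 hKt)
      simp [ENNReal.div_eq_zero_iff, hζ0]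
    have hε₁t : ε₁ ≠ ⊤ :=
      ENNReal.mul_ne_top (ENNReal.div_lt_top ENNReal.coe_ne_top (by norm_num)).ne
        (ENNReal.inv_ne_top.2 hK0)
    set w : ℝ≥0∞ := (ζ : ℝ≥0∞) / 2 * K⁻¹ * C⁻¹ with hwdef
    have hw0 : w ≠ 0 :=
      mul_ne_zero hε₁0.ne' (ENNReal.inv_ne_zero.2 hCt)
    set v : ℝ≥0∞ := min w 1 with hv
    have hv0 : v ≠ 0 := (lt_min (pos_iff_ne_zero.2 hw0) zero_lt_one).ne'
    have hvt : v ≠ ⊤ := (min_le_right _ _).trans_lt ENNReal.one_lt_top |>.ne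
    have hvw : v ≤ w := min_le_left _ _
    set δ₁ : ℝ := v.toReal ^ (1/p) with hδ₁def
    have hδ₁ : 0 < δ₁ := Real.rpow_pos_of_pos (ENNReal.toReal_pos hv0 hvt) _
    have hδ₁p : ENNReal.ofReal δ₁ ^ p = v := by
      rw [hδ₁def, ENNReal.ofReal_rpow_of_nonneg (Real.rpow_nonneg ENNReal.toReal_nonneg _) hp.le,
        ← Real.rpow_mul ENNReal.toReal_nonneg, one_div, inv_mul_cancel₀ hp.ne',
        Real.rpow_one, ENNReal.ofReal_toReal hvt]
    have hr4ne : r / 4 ≠ ⊤ := (ENNReal.div_lt_top (hr1.trans_lt ENNReal.one_lt_top).ne (by norm_num)).ne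
    have hr40 : r / 4 ≠ 0 := by
      intro h
      rcases ENNReal.div_eq_zero_iff.1 h with h' | h'
      · exact hr0.ne' h'
      · exact (by norm_num : ((4:ℝ≥0∞)) ≠ ⊤) h'
    set r4 : ℝ := (r/4).toReal with hr4def
    have hr4pos : 0 < r4 := ENNReal.toReal_pos hr40 hr4ne
    set δ : ℝ := min δ₁ r4 with hδdef
    have hδ0 : 0 < δ := lt_min hδ₁ hr4pos
    have hδle : ENNReal.ofReal δ ≤ r / 4 := by
      rw [← ENNReal.ofReal_toReal hr4ne]
      exact ENNReal.ofReal_le_ofReal (min_le_right _ _)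
    have hδp : ENNReal.ofReal δ ^ p ≤ v := by
      rw [← hδ₁p]
      exact ENNReal.rpow_le_rpow (ENNReal.ofReal_le_ofReal (min_le_left _ _)) hp.le
    -- get a Hausdorff cover at scale r/4
    have hpre0 : OuterMeasure.mkMetric'.pre (fun t => EMetric.diam t ^ p) (r/4) B = 0 := by
      refine le_antisymm ?_ zero_le
      have h1 : OuterMeasure.mkMetric'.pre (fun t => EMetric.diam t ^ p) (r/4) B
          ≤ OuterMeasure.mkMetric' (fun t => EMetric.diam t ^ p) B := by
        rw [mkMetric'_outer_apply]
        exact le_iSup₂ (f := fun r' (_ : 0 < r') =>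
          OuterMeasure.mkMetric'.pre (fun t => EMetric.diam t ^ p) r' B) (r/4)
          (pos_iff_ne_zero.2 hr40)
      rw [← hausdorff_outer, hμ] at h1
      exact h1
    have hlt : OuterMeasure.mkMetric'.pre (fun t => EMetric.diam t ^ p) (r/4) B < ε₁ := by
      rw [hpre0]; exact hε₁0
    rw [OuterMeasure.mkMetric'.pre, OuterMeasure.boundedBy_apply] at hlt
    obtain ⟨t, hlt⟩ := iInf_lt_iff.1 hlt
    obtain ⟨htcov, hlt⟩ := iInf_lt_iff.1 hlt
    have hdiam : ∀ n, (t n).Nonempty → EMetric.diam (t n) ≤ r/4 := by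
      intro n hn
      by_contra h
      have htop : (⊤:ℝ≥0∞) ≤ ∑' n,
          ⨆ _ : (t n).Nonempty, extend (fun s (_ : EMetric.diam s ≤ r/4) => EMetric.diam s ^ p) (t n) := by
        refine le_trans ?_ (ENNReal.le_tsum n)
        rw [iSup_pos hn, extend_eq_top (fun s (_ : EMetric.diam s ≤ r/4) => EMetric.diam s ^ p) h]
      exact absurd (htop.trans_lt hlt) (by simp [hε₁t.lt_top.ne])
    classical
    set U : ℕ → Set X := fun n =>
      if h : (t n ∩ B).Nonempty then
        Metric.ball h.some ((EMetric.diam (t n ∩ B)).toReal + δ * 2⁻¹ ^ n)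
      else ∅ with hU
    have hdfin : ∀ n, (t n).Nonempty → EMetric.diam (t n ∩ B) ≠ ⊤ := fun n hn =>
      (((EMetric.diam_mono Set.inter_subset_left).trans (hdiam n hn)).trans_lt
        hr4ne.lt_top).ne
    have hUcov : B ⊆ ⋃ n, U n := by
      intro z hz
      rcases Set.mem_iUnion.1 (htcov hz) with ⟨n, hn⟩
      have hne : (t n ∩ B).Nonempty := ⟨z, hn, hz⟩
      refine Set.mem_iUnion.2 ⟨n, ?_⟩
      rw [hU]
      simp only [dif_pos hne]
      have h1 : edist z hne.some ≤ EMetric.diam (t n ∩ B) :=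
        EMetric.edist_le_diam_of_mem ⟨hn, hz⟩ hne.some_mem
      have h2 : dist z hne.some ≤ (EMetric.diam (t n ∩ B)).toReal := by
        rw [dist_edist]
        exact ENNReal.toReal_mono (hdfin n (hne.mono Set.inter_subset_left)) h1
      refine Metric.mem_ball.2 (h2.trans_lt ?_)
      have : 0 < δ * 2⁻¹ ^ n := by positivity
      linarith
    calc OuterMeasure.mkMetric'.pre (mQ Q) r B
        ≤ ∑' n, ⨆ _ : (U n).Nonempty,
            extend (fun s (_ : EMetric.diam s ≤ r) => mQ Q s) (U n) := by
          rw [OuterMeasure.mkMetric'.pre, OuterMeasure.boundedBy_apply]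
          exact iInf₂_le U hUcov
      _ ≤ ∑' n, (K * (⨆ _ : (t n).Nonempty,
              extend (fun s (_ : EMetric.diam s ≤ r/4) => EMetric.diam s ^ p) (t n))
            + K * (ENNReal.ofReal δ ^ p * ((2:ℝ≥0∞)⁻¹ ^ p) ^ n)) := by
          refine ENNReal.tsum_le_tsum fun n => ?_
          refine iSup_le fun hUne => ?_
          by_cases hne : (t n ∩ B).Nonempty
          · have htn : (t n).Nonempty := hne.mono Set.inter_subset_left
            set c := hne.some with hc
            set dn := EMetric.diam (t n ∩ B) with hdn
            set ρ : ℝ := dn.toReal + δ * 2⁻¹ ^ n with hρ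
            have hUn : U n = Metric.ball c ρ := by rw [hU]; simp only [dif_pos hne]; rfl
            have hδ2n0 : (0:ℝ) ≤ δ * 2⁻¹ ^ n := by positivity
            have hδ2nle : ENNReal.ofReal (δ * 2⁻¹ ^ n) ≤ ENNReal.ofReal δ :=
              ENNReal.ofReal_le_ofReal (by
                have : (2⁻¹:ℝ) ^ n ≤ 1 := pow_le_one₀ (by norm_num) (by norm_num)
                nlinarith)
            have hdiamU : EMetric.diam (U n) ≤ 2 * dn + 2 * ENNReal.ofReal (δ * 2⁻¹ ^ n) := by
              rw [hUn, ← Metric.emetric_ball]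
              refine EMetric.diam_ball.trans ?_
              rw [hρ, ENNReal.ofReal_add ENNReal.toReal_nonneg hδ2n0,
                ENNReal.ofReal_toReal (hdfin n htn), mul_add]
            have hdnr : dn ≤ r/4 := (EMetric.diam_mono Set.inter_subset_left).trans (hdiam n htn)
            have hdUr : EMetric.diam (U n) ≤ r := by
              refine hdiamU.trans ?_
              calc 2 * dn + 2 * ENNReal.ofReal (δ * 2⁻¹ ^ n)
                  ≤ 2 * (r/4) + 2 * (r/4) :=
                    add_le_add (mul_le_mul_right hdnr 2)
                      (mul_le_mul_right (hδ2nle.trans hδle) 2)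
                _ = r := by
                    rw [← add_mul]; norm_num
                    rw [ENNReal.mul_div_cancel' (by norm_num) (by norm_num)]
            have hdU1 : EMetric.diam (U n) ≤ 1 := hdUr.trans hr1
            have hQc : p ≤ Q c := hQge c hne.some_mem.2
            have hterm : extend (fun s (_ : EMetric.diam s ≤ r) => mQ Q s) (U n)
                ≤ EMetric.diam (U n) ^ p := by
              rw [extend_eq (fun s (_ : EMetric.diam s ≤ r) => mQ Q s) hdUr]
              calc mQ Q (U n) ≤ EMetric.diam (U n) ^ Q c := by
                    refine iInf_le_of_le c (iInf_le_of_le ρ ?_)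
                    exact iInf_le _ hUn
                _ ≤ EMetric.diam (U n) ^ p :=
                    ENNReal.rpow_le_rpow_of_exponent_ge hdU1 hQc
            have hsplit : EMetric.diam (U n) ^ p
                ≤ K * dn ^ p + K * (ENNReal.ofReal δ ^ p * ((2:ℝ≥0∞)⁻¹ ^ p) ^ n) := by
              calc EMetric.diam (U n) ^ p
                  ≤ (2 * dn + 2 * ENNReal.ofReal (δ * 2⁻¹ ^ n)) ^ p :=
                    ENNReal.rpow_le_rpow hdiamU hp.le
                _ ≤ (2 * (2 * dn)) ^ p + (2 * (2 * ENNReal.ofReal (δ * 2⁻¹ ^ n))) ^ p :=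
                    add_rpow_le hp.le _ _
                _ = K * dn ^ p + K * ENNReal.ofReal (δ * 2⁻¹ ^ n) ^ p := by
                    rw [← mul_assoc, ← mul_assoc]
                    norm_num
                    rw [ENNReal.mul_rpow_of_nonneg _ _ hp.le,
                      ENNReal.mul_rpow_of_nonneg _ _ hp.le]
                _ = K * dn ^ p + K * (ENNReal.ofReal δ ^ p * ((2:ℝ≥0∞)⁻¹ ^ p) ^ n) := by
                    congr 1
                    rw [ENNReal.ofReal_mul hδ0.le, ENNReal.ofReal_pow (by norm_num),
                      ENNReal.ofReal_inv_of_pos (by norm_num), ENNReal.ofReal_ofNat,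
                      ENNReal.mul_rpow_of_nonneg _ _ hp.le,
                      ← ENNReal.rpow_natCast (2⁻¹:ℝ≥0∞) n, ← ENNReal.rpow_mul, mul_comm (n:ℝ) p,
                      ENNReal.rpow_mul, ENNReal.rpow_natCast]
            have hdnle : dn ^ p ≤ ⨆ _ : (t n).Nonempty,
                extend (fun s (_ : EMetric.diam s ≤ r/4) => EMetric.diam s ^ p) (t n) := by
              refine le_iSup_of_le htn ?_
              rw [extend_eq (fun s (_ : EMetric.diam s ≤ r/4) => EMetric.diam s ^ p) (hdiam n htn)]
              exact ENNReal.rpow_le_rpow (EMetric.diam_mono Set.inter_subset_left) hp.le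
            exact hterm.trans (hsplit.trans (add_le_add (mul_le_mul_right hdnle K) le_rfl))
          · exfalso
            rw [hU] at hUne
            simp only [dif_neg hne] at hUne
            exact Set.not_nonempty_empty hUne
      _ = K * (∑' n, ⨆ _ : (t n).Nonempty,
              extend (fun s (_ : EMetric.diam s ≤ r/4) => EMetric.diam s ^ p) (t n))
            + K * (ENNReal.ofReal δ ^ p * (1 - (2:ℝ≥0∞)⁻¹ ^ p)⁻¹) := by
          rw [ENNReal.tsum_add, ENNReal.tsum_mul_left, ENNReal.tsum_mul_left,
            ENNReal.tsum_mul_left, ENNReal.tsum_geometric]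
      _ ≤ K * ε₁ + K * (w * C) := by
          refine add_le_add (mul_le_mul_right hlt.le K) (mul_le_mul_right ?_ K)
          exact mul_le_mul' (hδp.trans hvw) le_rfl
      _ ≤ (ζ : ℝ≥0∞) := by
          have h1 : K * ε₁ = (ζ:ℝ≥0∞)/2 := by
            rw [hε₁def, mul_comm ((ζ:ℝ≥0∞)/2), ← mul_assoc, ENNReal.mul_inv_cancel hK0 hKt,
              one_mul]
          have h2 : K * (w * C) = (ζ:ℝ≥0∞)/2 := by
            rw [hwdef]
            calc K * ((ζ:ℝ≥0∞)/2 * K⁻¹ * C⁻¹ * C)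
                = (ζ:ℝ≥0∞)/2 * (K * K⁻¹) * (C⁻¹ * C) := by ring
              _ = (ζ:ℝ≥0∞)/2 := by
                  rw [ENNReal.mul_inv_cancel hK0 hKt, ENNReal.inv_mul_cancel hC0 hCt,
                    mul_one, mul_one]
          rw [h1, h2, ENNReal.add_halves]
  refine iSup₂_le fun r hr => ?_
  calc OuterMeasure.mkMetric'.pre (mQ Q) r B
      ≤ OuterMeasure.mkMetric'.pre (mQ Q) (min r 1) B :=
        OuterMeasure.mkMetric'.mono_pre _ (min_le_left r 1) B
    _ ≤ 0 := key _ (lt_min hr zero_lt_one) (min_le_right _ _)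

lemma hausdorff_le_lambdaQc {X : Type*} [MetricSpace X] [MeasurableSpace X] [BorelSpace X]
    (Q : X → ℝ) {x₀ : X} {p ε : ℝ} (hp : 0 ≤ p) (hε : 0 < ε) (hε1 : ε ≤ 1)
    (hQle : ∀ y : X, dist y x₀ < 2 * ε → Q y ≤ p) :
    μH[p] (Metric.ball x₀ ε) ≤ lambdaQc Q (Metric.ball x₀ ε) := by
  set B := Metric.ball x₀ ε with hB
  rw [lambdaQc_eq Q measurableSet_ball, hausdorff_outer]
  refine le_of_tendsto_of_tendsto (OuterMeasure.mkMetric'.tendsto_pre _ B)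
    (OuterMeasure.mkMetric'.tendsto_pre _ B) ?_
  have hmin : (0 : ℝ≥0∞) < min (ENNReal.ofReal ε) 1 :=
    lt_min (by simpa using hε) zero_lt_one
  filter_upwards [Ioc_mem_nhdsGT hmin] with r hr
  simp only [OuterMeasure.mkMetric'.pre, OuterMeasure.boundedBy_apply]
  refine le_iInf₂ fun t ht => ?_
  refine iInf₂_le_of_le (fun n => t n ∩ B) (fun z hz => ?_) (ENNReal.tsum_le_tsum fun n => ?_)
  · rcases Set.mem_iUnion.1 (ht hz) with ⟨n, hn⟩
    exact Set.mem_iUnion.2 ⟨n, hn, hz⟩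
  · refine iSup_le fun hne => ?_
    refine le_iSup_of_le (hne.mono Set.inter_subset_left) ?_
    show extend (fun s (_ : EMetric.diam s ≤ r) => EMetric.diam s ^ p) (t n ∩ B) ≤
      extend (fun s (_ : EMetric.diam s ≤ r) => mQ Q s) (t n)
    by_cases hd : EMetric.diam (t n) ≤ r
    · rw [extend_eq (fun s (_ : EMetric.diam s ≤ r) => mQ Q s) hd,
        extend_eq (fun s (_ : EMetric.diam s ≤ r) => EMetric.diam s ^ p)
          ((EMetric.diam_mono Set.inter_subset_left).trans hd)]
      refine le_iInf fun c => le_iInf fun ρ => le_iInf fun hrep => ?_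
      have hne' : (t n).Nonempty := hne.mono Set.inter_subset_left
      have hρ : 0 < ρ := Metric.nonempty_ball.1 (hrep ▸ hne')
      have hc : c ∈ t n := hrep ▸ Metric.mem_ball_self hρ
      obtain ⟨z, hz⟩ := hne
      have h1 : edist c z ≤ ENNReal.ofReal ε :=
        ((EMetric.edist_le_diam_of_mem hc hz.1).trans hd).trans
          (hr.2.trans (min_le_left _ _))
      have hcz : dist c z ≤ ε := by
        rw [edist_le_ofReal hε.le] at h1; exact h1
      have hzx : dist z x₀ < ε := Metric.mem_ball.1 hz.2
      have hQc : Q c ≤ p := hQle c (by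
        calc dist c x₀ ≤ dist c z + dist z x₀ := dist_triangle _ _ _
          _ < ε + ε := by linarith
          _ = 2 * ε := by ring)
      have hdiam1 : EMetric.diam (t n) ≤ 1 := hd.trans (hr.2.trans (min_le_right _ _))
      calc EMetric.diam (t n ∩ B) ^ p ≤ EMetric.diam (t n) ^ p :=
            ENNReal.rpow_le_rpow (EMetric.diam_mono Set.inter_subset_left) hp
        _ ≤ EMetric.diam (t n) ^ Q c :=
            ENNReal.rpow_le_rpow_of_exponent_ge hdiam1 hQc
    · rw [extend_eq_top (fun s (_ : EMetric.diam s ≤ r) => mQ Q s) hd]; exact le_top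


theorem statement7 {X : Type*} [MetricSpace X] [CompactSpace X]
    [MeasurableSpace X] [BorelSpace X]
    (Q : X → ℝ) (hQ0 : ∀ x, 0 ≤ Q x) (hQcont : Continuous Q)
    (hamen : ∀ (x : X) (ρ : ℝ), 0 < ρ →
      0 < lambdaQc Q (Metric.ball x ρ) ∧ lambdaQc Q (Metric.ball x ρ) < ⊤) :
    ∀ x : X, localDimH x = ENNReal.ofReal (Q x) := by
  intro x₀
  refine le_antisymm ?_ ?_
  · -- upper bound
    refine ENNReal.le_of_forall_pos_le_add fun η hη _ => ?_
    obtain ⟨δ, hδ0, hδ⟩ := Metric.continuousAt_iff.1 hQcont.continuousAt (η:ℝ)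
      (by exact_mod_cast hη)
    set ε : ℝ := min (δ/2) (1/2) with hεdef
    have hε0 : 0 < ε := lt_min (by linarith) (by norm_num)
    have hε1 : ε ≤ 1 := (min_le_right _ _).trans (by norm_num)
    have hQle : ∀ y : X, dist y x₀ < 2 * ε → Q y ≤ Q x₀ + η := by
      intro y hy
      have h2ε : 2 * ε ≤ δ := by
        have := min_le_left (δ/2) (1/2)
        rw [hεdef] at *
        nlinarith [this]
      have := hδ (lt_of_lt_of_le hy h2ε)
      rw [Real.dist_eq, abs_lt] at this
      linarith [this.2]
    have hp0 : (0:ℝ) ≤ Q x₀ + η := add_nonneg (hQ0 x₀) η.2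
    have hle := hausdorff_le_lambdaQc Q hp0 hε0 hε1 hQle
    have hfin := (hamen x₀ ε hε0).2
    have hnt : μH[Q x₀ + (η:ℝ)] (Metric.ball x₀ ε) ≠ ⊤ := (hle.trans_lt hfin).ne
    have hdim : dimH (Metric.ball x₀ ε) ≤ ((Q x₀ + (η:ℝ)).toNNReal : ℝ≥0∞) :=
      dimH_le_of_hausdorffMeasure_ne_top (by rwa [Real.coe_toNNReal _ hp0])
    have h1 : localDimH x₀ ≤ dimH (Metric.ball x₀ ε) := by
      rw [localDimH]
      exact iInf₂_le ε hε0
    refine (h1.trans hdim).trans ?_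
    rw [show (((Q x₀ + (η:ℝ)).toNNReal : ℝ≥0∞)) = ENNReal.ofReal (Q x₀ + (η:ℝ)) from rfl]
    refine le_of_eq ?_
    rw [ENNReal.ofReal_add (hQ0 x₀) (by positivity), ENNReal.ofReal_coe_nnreal]
  · -- lower bound
    rw [localDimH]
    refine le_iInf₂ fun ε hε => ?_
    rcases eq_or_lt_of_le (hQ0 x₀) with h0 | hq0
    · rw [← h0]; simp
    by_contra hlt
    push_neg at hlt
    obtain ⟨z, hz1, hz2⟩ := exists_between hlt
    have hzt : z ≠ ⊤ := (hz2.trans_le le_top).ne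
    set p : ℝ := z.toReal with hpdef
    have hz0 : z ≠ 0 := ((zero_le : (0:ℝ≥0∞) ≤ _).trans_lt hz1).ne'
    have hp0 : 0 < p := ENNReal.toReal_pos hz0 hzt
    have hpq : p < Q x₀ := by
      have := hz2
      rwa [ENNReal.lt_ofReal_iff_toReal_lt hzt] at this
    obtain ⟨δ, hδ0, hδ⟩ := Metric.continuousAt_iff.1 hQcont.continuousAt (Q x₀ - p)
      (by linarith)
    set ε' : ℝ := min ε δ with hε'def
    have hε'0 : 0 < ε' := lt_min hε hδ0
    have hQge : ∀ y ∈ Metric.ball x₀ ε', p ≤ Q y := by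
      intro y hy
      have := hδ (lt_of_lt_of_le (Metric.mem_ball.1 hy) (min_le_right _ _))
      rw [Real.dist_eq, abs_lt] at this
      linarith [this.1]
    have hdimlt : dimH (Metric.ball x₀ ε') < ENNReal.ofReal p := by
      calc dimH (Metric.ball x₀ ε') ≤ dimH (Metric.ball x₀ ε) :=
            dimH_mono (Metric.ball_subset_ball (min_le_left _ _))
        _ < z := hz1
        _ = ENNReal.ofReal p := (ENNReal.ofReal_toReal hzt).symm
    have hμ0 : μH[p] (Metric.ball x₀ ε') = 0 := by
      have h := hausdorffMeasure_of_dimH_lt (s := Metric.ball x₀ ε') (d := p.toNNReal)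
        (by rwa [show ((p.toNNReal : ℝ≥0∞)) = ENNReal.ofReal p from rfl])
      rwa [Real.coe_toNNReal _ hp0.le] at h
    have h0 := lambdaQc_eq_zero Q hp0 hε'0 hQge hμ0
    exact absurd h0 (hamen x₀ ε' hε'0).1.ne'
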